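/- Let e' = (0̄, 1) denote the element of IS_m ≀_p IS_n whose second component is the identity map of N_n and whose first component 0̄ sends every x ∈ N_n to the empty partial map 0 of IS_m. Then every R-cross-section of IS_m ≀_p IS_n contains e', and every semigroup isomorphism φ: R' → R'' between R-cross-sections of IS_m ≀_p IS_n satisfies φ(e') = e'. -/

import Mathlib

open scoped Classical

/-- `IS n` is the full inverse symmetric semigroup: all partial bijections of `Fin n`;
multiplication is composition of partial maps (maps acting on the right). -/
abbrev IS (n : ℕ) : Type := PEquiv (Fin n) (Fin n)

noncomputable section
namespace ISW

instance {n : ℕ} : Mul (IS n) := ⟨PEquiv.trans⟩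
instance {n : ℕ} : One (IS n) := ⟨PEquiv.refl _⟩

/-- The domain of a partial bijection. -/
def pdom {n : ℕ} (f : IS n) : Set (Fin n) := {x | (f x).isSome}

/-- The range of a partial bijection. -/
def pran {n : ℕ} (f : IS n) : Set (Fin n) := {y | (f.symm y).isSome}

/-- Green's R-relation on a semigroup (with identity): `u R v` iff `uS = vS`. -/
def GreenR {S : Type*} [Mul S] (u v : S) : Prop :=
  {w | ∃ s, w = u * s} = {w | ∃ s, w = v * s}

/-- Green's L-relation on a semigroup (with identity): `u L v` iff `Su = Sv`. -/
def GreenL {S : Type*} [Mul S] (u v : S) : Prop :=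
  {w | ∃ s, w = s * u} = {w | ∃ s, w = s * v}

/-- An R-cross-section: a subsemigroup containing exactly one element of every
Green R-class. -/
def IsRCrossSection {S : Type*} [Mul S] (T : Set S) : Prop :=
  (∀ a ∈ T, ∀ b ∈ T, a * b ∈ T) ∧ ∀ x : S, ∃! t, t ∈ T ∧ GreenR x t

/-- An L-cross-section: a subsemigroup containing exactly one element of every
Green L-class. -/
def IsLCrossSection {S : Type*} [Mul S] (T : Set S) : Prop :=
  (∀ a ∈ T, ∀ b ∈ T, a * b ∈ T) ∧ ∀ x : S, ∃! t, t ∈ T ∧ GreenL x t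

/-- `φ` realizes a semigroup isomorphism from `T₁` onto `T₂`. -/
def IsSemiIso {S₁ S₂ : Type*} [Mul S₁] [Mul S₂] (T₁ : Set S₁) (T₂ : Set S₂)
    (φ : S₁ → S₂) : Prop :=
  Set.BijOn φ T₁ T₂ ∧ ∀ a ∈ T₁, ∀ b ∈ T₁, φ (a * b) = φ a * φ b

/-- The partial wreath product `IS m ≀_p IS n`: pairs `(f, a)` with `a ∈ IS n` and
`f` a partial map from `Fin n` to `IS m` whose domain equals the domain of `a`. -/
structure PW (m n : ℕ) where
  base : IS n
  fib : Fin n → Option (IS m)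
  dom_eq : ∀ x, (fib x).isSome ↔ (base x).isSome

/-- Multiplication of the partial wreath product: `(f,a)·(g,b) = (f g^a, ab)`. -/
instance {m n : ℕ} : Mul (PW m n) where
  mul u v :=
    { base := u.base * v.base
      fib := fun x => Option.map₂ (· * ·) (u.fib x) ((u.base x).bind v.fib)
      dom_eq := by
        intro x
        show _ ↔ (((u.base x).bind v.base)).isSome
        cases h : u.base x with
        | none =>
          have : u.fib x = none := by
            have := (u.dom_eq x)
            simp [h] at this
            simpa using Option.not_isSome_iff_eq_none.mp (by simp [this])
          simp [h, this, Option.map₂]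
        | some y =>
          have hf : (u.fib x).isSome := (u.dom_eq x).mpr (by simp [h])
          obtain ⟨s, hs⟩ := Option.isSome_iff_exists.mp hf
          cases h2 : v.base y with
          | none =>
            have : v.fib y = none := by
              have := (v.dom_eq y)
              simp [h2] at this
              simpa using Option.not_isSome_iff_eq_none.mp (by simp [this])
            simp [h, h2, hs, this, Option.map₂]
          | some z =>
            have hg : (v.fib y).isSome := (v.dom_eq y).mpr (by simp [h2])
            obtain ⟨t, ht⟩ := Option.isSome_iff_exists.mp hg
            simp [h, h2, hs, ht, Option.map₂] }

/-- The identity of the partial wreath product. -/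
instance {m n : ℕ} : One (PW m n) where
  one :=
    { base := 1
      fib := fun _ => some 1
      dom_eq := by intro x; simp; rfl }

/-- `chainFun L j x`: with `L` listing the elements of a block in increasing order and
`0 ≤ j < |L|` (`j` is the 0-based version of the paper's index), this is the value at `x` of
the chain `a_{i,j}`: the partial bijection with domain everything except `L[j]`,
sending `L[l] ↦ L[l+1]` for `l < j` and fixing all other points. -/
def chainFun {n : ℕ} (L : List (Fin n)) (j : ℕ) (x : Fin n) : Option (Fin n) :=
  if x ∈ L then
    if L.idxOf x = j then none
    else if L.idxOf x < j then L[L.idxOf x + 1]?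
    else some x
  else some x

/-- The generators `a_{i,j}` attached to an ordered decomposition with blocks `B i`. -/
def RGens {n s : ℕ} (B : Fin s → List (Fin n)) : Set (IS n) :=
  {a : IS n | ∃ i : Fin s, ∃ j : ℕ, j < (B i).length ∧ ∀ x, a x = chainFun (B i) j x}

/-- `R(M⃗₁, …, M⃗ₛ)`: the subsemigroup of `IS n` generated by the chains `a_{i,j}`
together with the identity map. -/
def RSec {n s : ℕ} (B : Fin s → List (Fin n)) : Set (IS n) :=
  (Subsemigroup.closure (RGens B ∪ {1}) : Subsemigroup (IS n))

/-- A decomposition of `Fin n` into disjoint nonempty blocks, each block equipped with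
a linear order, recorded by listing the elements of each block in increasing order. -/
structure OrderedPartition (n s : ℕ) where
  B : Fin s → List (Fin n)
  nonempty : ∀ i, B i ≠ []
  nodup : ∀ i, (B i).Nodup
  disjoint : ∀ i j, i ≠ j → ∀ x, x ∈ B i → x ∉ B j
  cover : ∀ x, ∃ i, x ∈ B i

/-- The chain `a_{i,j}` of the block listed by `L`, viewed inside `IS(M_i)`, i.e. embedded
into `IS n` as a partial bijection whose domain is contained in the block: it is defined on
`L` minus `L[j]`, sends `L[l] ↦ L[l+1]` for `l < j` and fixes the other points of `L`. -/
def chainFunB {n : ℕ} (L : List (Fin n)) (j : ℕ) (x : Fin n) : Option (Fin n) :=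
  if x ∈ L then
    if L.idxOf x = j then none
    else if L.idxOf x < j then L[L.idxOf x + 1]?
    else some x
  else none

/-- The generators of `R(M⃗)` inside `IS(M)` (embedded in `IS n`), `M` listed by `L`. -/
def BlockGens {n : ℕ} (L : List (Fin n)) : Set (IS n) :=
  {a : IS n | ∃ j : ℕ, j < L.length ∧ ∀ x, a x = chainFunB L j x}

/-- The identity of `IS(M)` (embedded in `IS n`): the identity map of the block listed by `L`. -/
def idOn {n : ℕ} (L : List (Fin n)) : Set (IS n) :=
  {a : IS n | ∀ x, a x = if x ∈ L then some x else none}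

/-- The R-cross-section `R(M⃗)` of `IS(M)`, embedded into `IS n`, for the block listed by `L`. -/
def RSecBlock {n : ℕ} (L : List (Fin n)) : Set (IS n) :=
  (Subsemigroup.closure (BlockGens L ∪ idOn L) : Subsemigroup (IS n))

/-- The wreath product `R_i ≀_p R(M⃗_i)` where `R(M⃗_i) ⊆ IS(M_i)`, `M_i` listed by `L`,
and `R_i = T ⊆ IS m`, realized inside `PW m n` via the natural embedding
`IS m ≀_p IS(M_i) ⊆ IS m ≀_p IS n`. -/
def WBlock (m n : ℕ) (L : List (Fin n)) (T : Set (IS m)) : Set (PW m n) :=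
  {u : PW m n | u.base ∈ RSecBlock L ∧ ∀ x f, u.fib x = some f → f ∈ T}

/-- The element `e' = (0̄, 1)` of `IS m ≀_p IS n`: the second component is the identity of
`IS n` and the first component sends every point to the empty map `0` of `IS m`. -/
def ezero (m n : ℕ) : PW m n where
  base := 1
  fib := fun _ => some ⊥
  dom_eq := by intro x; simp; rfl


/-! ### Auxiliary development for Statement 16 -/

section Aux

variable {m n : ℕ}

lemma PW.ext' {u v : PW m n} (hb : u.base = v.base) (hf : ∀ x, u.fib x = v.fib x) :
    u = v := by
  cases u; cases v
  simp only [PW.mk.injEq] at *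
  exact ⟨hb, funext hf⟩

lemma mul_base' (u v : PW m n) : (u * v).base = u.base.trans v.base := rfl

lemma mul_fib' (u v : PW m n) (x : Fin n) :
    (u * v).fib x = Option.map₂ (· * ·) (u.fib x) ((u.base x).bind v.fib) := rfl

lemma trans_apply' (f g : IS n) (x : Fin n) : (f.trans g) x = (f x).bind g := rfl

lemma is_mul_def (f g : IS n) : f * g = f.trans g := rfl

lemma is_one_def : (1 : IS n) = PEquiv.refl (Fin n) := rfl

lemma fib_eq_none {u : PW m n} {x : Fin n} (h : u.base x = none) : u.fib x = none := by
  have := u.dom_eq x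
  simp [h] at this
  exact Option.not_isSome_iff_eq_none.mp (by simp [this])

lemma fib_isSome {u : PW m n} {x : Fin n} (h : (u.base x).isSome) : (u.fib x).isSome :=
  (u.dom_eq x).mpr h

lemma pw_mul_assoc (u v w : PW m n) : u * v * w = u * (v * w) := by
  apply PW.ext'
  · exact PEquiv.trans_assoc _ _ _
  · intro x
    show Option.map₂ (· * ·) ((u * v).fib x) (((u.base.trans v.base) x).bind w.fib)
      = Option.map₂ (· * ·) (u.fib x) ((u.base x).bind (v * w).fib)
    cases hb : u.base x with
    | none =>
      simp [fib_eq_none hb, mul_fib', hb, trans_apply', Option.map₂]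
    | some y =>
      obtain ⟨f, hf⟩ := Option.isSome_iff_exists.mp (fib_isSome (u := u) (x := x) (by rw [hb]; rfl))
      cases hb2 : v.base y with
      | none =>
        simp [mul_fib', hb, hb2, hf, fib_eq_none hb2, trans_apply', Option.map₂]
      | some z =>
        obtain ⟨g, hg⟩ := Option.isSome_iff_exists.mp (fib_isSome (u := v) (x := y) (by rw [hb2]; rfl))
        cases hw : w.fib z with
        | none =>
          simp [mul_fib', hb, hb2, hf, hg, hw, trans_apply', Option.map₂]
        | some h =>
          simp [mul_fib', hb, hb2, hf, hg, hw, trans_apply', Option.map₂,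
            is_mul_def, PEquiv.trans_assoc]

lemma pw_mul_one (u : PW m n) : u * 1 = u := by
  apply PW.ext'
  · exact PEquiv.trans_refl _
  · intro x
    show Option.map₂ (· * ·) (u.fib x) ((u.base x).bind fun _ => some 1) = u.fib x
    cases hb : u.base x with
    | none => simp [fib_eq_none hb, Option.map₂]
    | some y =>
      obtain ⟨f, hf⟩ := Option.isSome_iff_exists.mp (fib_isSome (u := u) (x := x) (by rw [hb]; rfl))
      simp [hf, Option.map₂, is_mul_def, is_one_def, PEquiv.trans_refl]

/-- The zero element of the partial wreath product. -/
def zpw : PW m n := ⟨⊥, fun _ => none, by intro x; simp⟩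

lemma zpw_base (x : Fin n) : (zpw : PW m n).base x = none := rfl

lemma base_bot_eq_zpw {u : PW m n} (h : ∀ x, u.base x = none) : u = zpw := by
  apply PW.ext'
  · exact PEquiv.ext h
  · intro x; simp [fib_eq_none (h x), zpw]

lemma zpw_mul (u : PW m n) : zpw * u = zpw := by
  apply base_bot_eq_zpw
  intro x
  simp [mul_base', trans_apply', zpw_base]

lemma mul_zpw (u : PW m n) : u * zpw = zpw := by
  apply base_bot_eq_zpw
  intro x
  cases hb : u.base x <;> simp [mul_base', trans_apply', hb, zpw_base]

/-- `isZ u` : all fibers of `u` are the empty partial map (where defined). -/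
def isZ (u : PW m n) : Prop := ∀ x, u.fib x = none ∨ u.fib x = some ⊥

lemma isZ_fib {u : PW m n} (hu : isZ u) {x : Fin n} (h : (u.base x).isSome) :
    u.fib x = some ⊥ := by
  rcases hu x with h' | h'
  · exact absurd (fib_isSome h) (by simp [h'])
  · exact h'

/-- The element with given base and all fibers equal to the empty map. -/
def mkZ (b : IS n) : PW m n :=
  ⟨b, fun x => if (b x).isSome then some ⊥ else none, by
    intro x; by_cases h : (b x).isSome <;> simp [h]⟩

lemma isZ_mkZ (b : IS n) : isZ (mkZ b : PW m n) := by
  intro x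
  by_cases h : (b x).isSome <;> simp [mkZ, h]

lemma mkZ_base (b : IS n) : (mkZ b : PW m n).base = b := rfl

/-! ### Green's R relation basics -/

lemma greenR_dvd {u v : PW m n} (h : GreenR u v) : ∃ s, v = u * s := by
  have hv : v ∈ {w | ∃ s, w = v * s} := ⟨1, (pw_mul_one v).symm⟩
  rw [← h] at hv
  exact hv

lemma greenR_of_mutual {u v : PW m n} (h1 : ∃ s, v = u * s) (h2 : ∃ s, u = v * s) :
    GreenR u v := by
  obtain ⟨s, hs⟩ := h1
  obtain ⟨t, ht⟩ := h2
  ext w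
  constructor
  · rintro ⟨r, rfl⟩
    exact ⟨t * r, by rw [← pw_mul_assoc, ← ht]⟩
  · rintro ⟨r, rfl⟩
    exact ⟨s * r, by rw [← pw_mul_assoc, ← hs]⟩

lemma greenR_trans' {u v w : PW m n} (h1 : GreenR u v) (h2 : GreenR v w) : GreenR u w :=
  h1.trans h2

lemma base_isSome_of_mul {u s : PW m n} {x : Fin n} (h : ((u * s).base x).isSome) :
    (u.base x).isSome := by
  rw [mul_base', trans_apply'] at h
  cases hb : u.base x with
  | none => simp [hb] at h
  | some y => simp

lemma isZ_mul_left {u : PW m n} (hu : isZ u) (s : PW m n) : isZ (u * s) := by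
  intro x
  rw [mul_fib']
  rcases hu x with h | h
  · simp [h, Option.map₂]
  · cases hc : (u.base x).bind s.fib with
    | none => simp [h, hc, Option.map₂]
    | some g => simp [h, hc, Option.map₂, is_mul_def, PEquiv.bot_trans]

lemma z_dvd {u v : PW m n} (hu : isZ u) (hv : isZ v)
    (hdom : ∀ x, (u.base x).isSome ↔ (v.base x).isSome) : ∃ s, v = u * s := by
  refine ⟨mkZ (u.base.symm.trans v.base), ?_⟩
  have hbase : ∀ x, (u.base.trans (u.base.symm.trans v.base)) x = v.base x := by
    intro x
    cases hb : u.base x with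
    | none =>
      have : v.base x = none := by
        have := hdom x
        simp [hb] at this
        exact Option.not_isSome_iff_eq_none.mp (by simp [this])
      simp [trans_apply', hb, this]
    | some y =>
      have hsy : u.base.symm y = some x := u.base.eq_some_iff.mpr hb
      simp [trans_apply', hb, hsy]
  apply PW.ext'
  · exact PEquiv.ext fun x => (hbase x).symm
  · intro x
    rw [mul_fib']
    cases hb : u.base x with
    | none =>
      have hv' : v.base x = none := by
        have := hdom x
        simp [hb] at this
        exact Option.not_isSome_iff_eq_none.mp (by simp [this])
      simp [fib_eq_none hb, fib_eq_none hv', Option.map₂]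
    | some y =>
      have huf : u.fib x = some ⊥ := isZ_fib hu (by simp [hb])
      have hvb : (v.base x).isSome := (hdom x).mp (by simp [hb])
      have hvf : v.fib x = some ⊥ := isZ_fib hv hvb
      have hsy : u.base.symm y = some x := u.base.eq_some_iff.mpr hb
      have hmy : (u.base.symm.trans v.base) y = v.base x := by simp [trans_apply', hsy]
      have hfib : (mkZ (u.base.symm.trans v.base) : PW m n).fib y = some ⊥ := by
        simp only [mkZ]
        rw [hmy]
        simp [hvb]
      simp [hb, huf, hvf, hfib, Option.map₂, is_mul_def, PEquiv.bot_trans]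

lemma greenR_of_isZ {u v : PW m n} (hu : isZ u) (hv : isZ v)
    (hdom : ∀ x, (u.base x).isSome ↔ (v.base x).isSome) : GreenR u v :=
  greenR_of_mutual (z_dvd hu hv hdom) (z_dvd hv hu fun x => (hdom x).symm)

/-! ### `ezero` basics -/

lemma ezero_base (x : Fin n) : (ezero m n).base x = some x := rfl

lemma ezero_fib (x : Fin n) : (ezero m n).fib x = some ⊥ := rfl

lemma isZ_ezero : isZ (ezero m n) := fun x => Or.inr rfl

lemma ezero_mul_fib (u : PW m n) (x : Fin n) :
    (ezero m n * u).fib x = (u.fib x).map fun _ => ⊥ := by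
  rw [mul_fib']
  show Option.map₂ (· * ·) (some ⊥) ((some x).bind u.fib) = _
  cases h : u.fib x <;>
    simp [h, Option.map₂, is_mul_def, PEquiv.bot_trans]

lemma ezero_mul_base (u : PW m n) : (ezero m n * u).base = u.base := by
  show PEquiv.trans _ _ = _
  exact PEquiv.refl_trans u.base

lemma ezero_mul_eq_iff (u : PW m n) : ezero m n * u = u ↔ isZ u := by
  constructor
  · intro h x
    have := congrArg (fun w => PW.fib w x) h
    simp only [ezero_mul_fib] at this
    cases hf : u.fib x with
    | none => exact Or.inl rfl
    | some g =>
      right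
      rw [hf] at this
      simpa [hf] using this.symm
  · intro h
    apply PW.ext' (ezero_mul_base u)
    intro x
    rw [ezero_mul_fib]
    rcases h x with h' | h' <;> simp [h']

lemma mul_eq_of_isZ {t v : PW m n} (hb : t.base = PEquiv.refl (Fin n)) (hv : isZ v) :
    t * v = v := by
  apply PW.ext'
  · rw [mul_base', hb, PEquiv.refl_trans]
  · intro x
    rw [mul_fib', hb]
    show Option.map₂ (· * ·) (t.fib x) ((some x).bind v.fib) = v.fib x
    rcases hv x with h | h
    · simp [h, Option.map₂]
    · have htf : (t.fib x).isSome := fib_isSome (by simp [hb, PEquiv.refl_apply])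
      obtain ⟨g, hg⟩ := Option.isSome_iff_exists.mp htf
      simp [h, hg, Option.map₂, is_mul_def, PEquiv.trans_bot]

lemma ezero_mul_of_base_refl {u : PW m n} (hb : u.base = PEquiv.refl (Fin n)) :
    ezero m n * u = ezero m n := by
  apply PW.ext'
  · rw [ezero_mul_base, hb]; rfl
  · intro x
    rw [ezero_mul_fib]
    have : (u.fib x).isSome := fib_isSome (by simp [hb, PEquiv.refl_apply])
    obtain ⟨g, hg⟩ := Option.isSome_iff_exists.mp this
    simp [hg, ezero_fib]

lemma ezero_idem : ezero m n * ezero m n = ezero m n :=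
  ezero_mul_of_base_refl rfl

lemma base_refl_of_idem {b : IS n} (htot : ∀ x, (b x).isSome)
    (hidem : b.trans b = b) : b = PEquiv.refl (Fin n) := by
  apply PEquiv.ext
  intro x
  obtain ⟨y, hy⟩ := Option.isSome_iff_exists.mp (htot x)
  have h1 : b y = some y := by
    have h2 := congrArg (fun f : IS n => f x) hidem
    simp only [trans_apply', hy, Option.bind_some, Option.bind_some] at h2
    exact h2
  have e1 : b.symm y = some x := b.eq_some_iff.mpr hy
  have e2 : b.symm y = some y := b.eq_some_iff.mpr h1
  rw [e1] at e2
  simp only [Option.some.injEq] at e2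
  rw [PEquiv.refl_apply, hy, e2]

/-! ### Membership of `zpw` and `ezero` in cross-sections -/

lemma zpw_mem {T : Set (PW m n)} (hT : IsRCrossSection T) : zpw ∈ T := by
  obtain ⟨t, ⟨htT, hG⟩, _⟩ := hT.2 zpw
  obtain ⟨s, hs⟩ := greenR_dvd hG
  rw [zpw_mul] at hs
  exact hs ▸ htT

lemma ezero_mem {T : Set (PW m n)} (hT : IsRCrossSection T) : ezero m n ∈ T := by
  obtain ⟨t, ⟨htT, hG⟩, huniq⟩ := hT.2 (ezero m n)
  obtain ⟨s1, hs1⟩ := greenR_dvd hG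
  obtain ⟨s0, hs0⟩ := greenR_dvd (hG.symm : GreenR t (ezero m n))
  have hZ : isZ t := hs1 ▸ isZ_mul_left isZ_ezero s1
  have htot : ∀ x, (t.base x).isSome := by
    intro x
    have : ((t * s0).base x).isSome := by rw [← hs0]; simp [ezero_base]
    exact base_isSome_of_mul this
  have ht2 : t * t ∈ T := hT.1 t htT t htT
  have hdom2 : ∀ x, (t.base x).isSome ↔ ((t * t).base x).isSome := by
    intro x
    obtain ⟨y, hy⟩ := Option.isSome_iff_exists.mp (htot x)
    simp [mul_base', trans_apply', hy, htot y]
  have hG2 : GreenR (ezero m n) (t * t) :=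
    hG.trans (greenR_of_isZ hZ (isZ_mul_left hZ t) hdom2)
  have heq : t * t = t := by
    rw [huniq (t * t) ⟨ht2, hG2⟩, huniq t ⟨htT, hG⟩]
  have hbase : t.base = PEquiv.refl (Fin n) :=
    base_refl_of_idem htot (congrArg PW.base heq)
  have : t = ezero m n := by
    apply PW.ext' hbase
    intro x
    rw [isZ_fib hZ (htot x), ezero_fib]
  rwa [this] at htT

/-! ### Representatives of Z-classes -/

lemma ofSet_isSome_iff (A : Set (Fin n)) (x : Fin n) :
    ((PEquiv.ofSet A) x).isSome ↔ x ∈ A := by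
  constructor
  · intro h
    obtain ⟨y, hy⟩ := Option.isSome_iff_exists.mp h
    have h2 := PEquiv.ofSet_eq_some_iff.mp hy
    exact h2.1 ▸ h2.2
  · intro h
    have : (PEquiv.ofSet A) x = some x := PEquiv.ofSet_eq_some_self_iff.mpr h
    simp [this]

lemma rep_spec {T : Set (PW m n)} (hT : IsRCrossSection T) (A : Set (Fin n)) :
    ∃ t ∈ T, isZ t ∧ ∀ x, (t.base x).isSome ↔ x ∈ A := by
  classical
  set w : PW m n := mkZ (PEquiv.ofSet A) with hw
  obtain ⟨t, ⟨htT, hG⟩, _⟩ := hT.2 w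
  obtain ⟨s1, hs1⟩ := greenR_dvd hG
  obtain ⟨s0, hs0⟩ := greenR_dvd (hG.symm : GreenR t w)
  have hZ : isZ t := hs1 ▸ isZ_mul_left (isZ_mkZ _) s1
  refine ⟨t, htT, hZ, fun x => ⟨?_, ?_⟩⟩
  · intro h
    have : ((w).base x).isSome := by
      rw [hs1] at h
      have := base_isSome_of_mul h
      exact this
    rw [hw, mkZ_base] at this
    exact (ofSet_isSome_iff A x).mp this
  · intro h
    have hwx : ((w).base x).isSome := by
      rw [hw, mkZ_base]
      exact (ofSet_isSome_iff A x).mpr h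
    have : ((t * s0).base x).isSome := by rw [← hs0]; exact hwx
    exact base_isSome_of_mul this

/-! ### The Z-set of a cross-section and its cardinality -/

/-- The set of elements of `T` fixed (on the left) by `ezero`. -/
def ZSet (T : Set (PW m n)) : Set (PW m n) := {u | u ∈ T ∧ ezero m n * u = u}

lemma zset_bij {T : Set (PW m n)} (hT : IsRCrossSection T) :
    Set.BijOn (fun u : PW m n => pdom u.base) (ZSet T) Set.univ := by
  refine ⟨fun u _ => trivial, ?_, ?_⟩
  · rintro u ⟨huT, hu⟩ v ⟨hvT, hv⟩ hdom
    have hZu : isZ u := (ezero_mul_eq_iff u).mp hu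
    have hZv : isZ v := (ezero_mul_eq_iff v).mp hv
    have hdom' : ∀ x, (u.base x).isSome ↔ (v.base x).isSome := by
      intro x
      have := Set.ext_iff.mp hdom x
      simpa [pdom] using this
    have hG : GreenR u v := greenR_of_isZ hZu hZv hdom'
    obtain ⟨t, _, huniq⟩ := hT.2 u
    have h1 := huniq u ⟨huT, rfl⟩
    have h2 := huniq v ⟨hvT, hG⟩
    rw [h1, h2]
  · rintro A -
    obtain ⟨t, htT, hZ, hdom⟩ := rep_spec hT A
    refine ⟨t, ⟨htT, (ezero_mul_eq_iff t).mpr hZ⟩, ?_⟩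
    ext x
    simpa [pdom] using hdom x

instance {α : Type*} [Finite α] : Finite (Option α) :=
  Finite.of_equiv (α ⊕ PUnit.{1}) (Equiv.optionEquivSumPUnit.{0} α).symm

instance : Finite (IS n) :=
  Finite.of_injective (fun f => (f : Fin n → Option (Fin n)))
    fun _ _ h => PEquiv.ext (congrFun h)

instance : Finite (PW m n) := by
  refine Finite.of_injective (fun u : PW m n => (u.base, u.fib)) ?_
  intro u v h
  simp only [Prod.mk.injEq] at h
  exact PW.ext' h.1 (congrFun h.2)

lemma zset_ncard {T : Set (PW m n)} (hT : IsRCrossSection T) :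
    (ZSet T).ncard = Set.ncard (Set.univ : Set (Set (Fin n))) := by
  rw [← Nat.card_coe_set_eq, ← Nat.card_coe_set_eq]
  exact Nat.card_congr (Set.BijOn.equiv _ (zset_bij hT))

end Aux

/-- the element `e' = (0̄, 1)` belongs to every R-cross-section of
`IS m ≀_p IS n`, and every isomorphism of R-cross-sections of `IS m ≀_p IS n` fixes it. -/
theorem ezero_mem_and_fixed (m n : ℕ) :
    (∀ T : Set (PW m n), IsRCrossSection T → ezero m n ∈ T) ∧
    (∀ (R' R'' : Set (PW m n)) (φ : PW m n → PW m n),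
      IsRCrossSection R' → IsRCrossSection R'' → IsSemiIso R' R'' φ →
      φ (ezero m n) = ezero m n) := by
  refine ⟨fun T hT => ezero_mem hT, ?_⟩
  intro R' R'' φ h' h'' hφ
  obtain ⟨hbij, hmul⟩ := hφ
  obtain ⟨hmaps, hinj, hsurj⟩ := hbij
  have he'1 : ezero m n ∈ R' := ezero_mem h'
  have he'2 : ezero m n ∈ R'' := ezero_mem h''
  have hz1 : zpw ∈ R' := zpw_mem h'
  have hz2 : zpw ∈ R'' := zpw_mem h''
  -- `φ` fixes the zero element
  have hφz : φ zpw = zpw := by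
    obtain ⟨u0, hu0R, hu0⟩ := hsurj hz2
    have h1 : φ zpw = φ zpw * φ u0 := by
      rw [← hmul _ hz1 _ hu0R, zpw_mul]
    rw [hu0, mul_zpw] at h1
    exact h1
  have he''R : φ (ezero m n) ∈ R'' := hmaps he'1
  have he''idem : φ (ezero m n) * φ (ezero m n) = φ (ezero m n) := by
    rw [← hmul _ he'1 _ he'1, ezero_idem]
  -- Step 1: the base of `φ e'` has full range
  have hsymm_tot : ∀ y, ((φ (ezero m n)).base.symm y).isSome := by
    by_contra hcon
    push_neg at hcon
    obtain ⟨y0, hy0⟩ := hcon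
    have hy0' : (φ (ezero m n)).base.symm y0 = none :=
      Option.not_isSome_iff_eq_none.mp (by simpa using hy0)
    obtain ⟨v, hvR, hvZ, hvdom⟩ := rep_spec h'' ({y0} : Set (Fin n))
    have hev : φ (ezero m n) * v = zpw := by
      apply base_bot_eq_zpw
      intro x
      rw [mul_base', trans_apply']
      cases he : (φ (ezero m n)).base x with
      | none => rfl
      | some y =>
        have hyne : y ≠ y0 := by
          intro h; subst h
          have hc := (φ (ezero m n)).base.eq_some_iff.mpr he
          rw [hy0'] at hc
          cases hc
        have hnone : v.base y = none := by
          apply Option.not_isSome_iff_eq_none.mp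
          rw [hvdom y]
          simpa using hyne
        simp [hnone]
    obtain ⟨u0, hu0R, hu0⟩ := hsurj hvR
    have h2 : φ (ezero m n * u0) = zpw := by rw [hmul _ he'1 _ hu0R, hu0]; exact hev
    have h3 : ezero m n * u0 = zpw := by
      apply hinj (h'.1 _ he'1 _ hu0R) hz1
      rw [h2, hφz]
    have h4 : u0 = zpw := by
      apply base_bot_eq_zpw
      intro x
      have h5 := congrArg (fun w : PW m n => w.base x) h3
      rw [ezero_mul_base] at h5
      exact h5
    have h5 : v = zpw := by rw [← hu0, h4, hφz]
    have h6 : (v.base y0).isSome := (hvdom y0).mpr rfl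
    rw [h5] at h6
    simp [zpw_base] at h6
  -- hence the base of `φ e'` is total
  have hbtot : ∀ x, ((φ (ezero m n)).base x).isSome := by
    set b := (φ (ezero m n)).base with hb
    have hinj2 : Function.Injective (fun y : Fin n => (b.symm y).get (hsymm_tot y)) := by
      intro y1 y2 h
      simp only at h
      have e1 : b.symm y1 = some ((b.symm y1).get (hsymm_tot y1)) := (Option.some_get _).symm
      have e2 : b.symm y2 = some ((b.symm y2).get (hsymm_tot y2)) := (Option.some_get _).symm
      have f1 : b ((b.symm y1).get (hsymm_tot y1)) = some y1 := b.eq_some_iff.mp e1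
      have f2 : b ((b.symm y2).get (hsymm_tot y2)) = some y2 := b.eq_some_iff.mp e2
      rw [h, f2] at f1
      exact (Option.some.injEq _ _ ▸ f1).symm ▸ rfl
    have hsurj2 := Finite.injective_iff_surjective.mp hinj2
    intro x
    obtain ⟨y, hy⟩ := hsurj2 x
    simp only at hy
    have : b.symm y = some x := by
      rw [← hy]
      exact (Option.some_get _).symm
    rw [b.eq_some_iff.mp this]
    rfl
  have hbrefl : (φ (ezero m n)).base = PEquiv.refl (Fin n) := by
    apply base_refl_of_idem hbtot
    rw [← mul_base']
    exact congrArg PW.base he''idem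
  -- Step 2: counting fixed sets
  by_contra hne
  set S1 : Set (PW m n) := ZSet R'' with hS1
  set S2 : Set (PW m n) := {u | u ∈ R'' ∧ φ (ezero m n) * u = u} with hS2
  have hsub : S1 ⊆ S2 := by
    rintro v ⟨hvR, hv⟩
    exact ⟨hvR, mul_eq_of_isZ hbrefl ((ezero_mul_eq_iff v).mp hv)⟩
  have he''S2 : φ (ezero m n) ∈ S2 := ⟨he''R, he''idem⟩
  have he''nS1 : φ (ezero m n) ∉ S1 := by
    rintro ⟨-, hfix⟩
    exact hne (by rw [← hfix]; exact ezero_mul_of_base_refl hbrefl)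
  have hbij2 : Set.BijOn φ (ZSet R') S2 := by
    refine ⟨?_, fun a ha b hb h => hinj ha.1 hb.1 h, ?_⟩
    · rintro u ⟨huR, hu⟩
      refine ⟨hmaps huR, ?_⟩
      rw [← hmul _ he'1 _ huR, hu]
    · rintro v ⟨hvR, hv⟩
      obtain ⟨u0, hu0R, hu0⟩ := hsurj hvR
      have hfix0 : ezero m n * u0 = u0 := by
        apply hinj (h'.1 _ he'1 _ hu0R) hu0R
        rw [hmul _ he'1 _ hu0R, hu0, hv]
      exact ⟨u0, ⟨hu0R, hfix0⟩, hu0⟩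
  have hc1 : S2.ncard = (ZSet R').ncard := by
    rw [← Nat.card_coe_set_eq, ← Nat.card_coe_set_eq]
    exact (Nat.card_congr (Set.BijOn.equiv _ hbij2)).symm
  have hc2 : (ZSet R').ncard = S1.ncard := by
    rw [zset_ncard h', hS1, zset_ncard h'']
  have heq : S1 = S2 := Set.eq_of_subset_of_ncard_le hsub (le_of_eq (hc1.trans hc2))
  exact he''nS1 (heq ▸ he''S2)

end ISW
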